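/- For every x ∈ ℝ, the series Σ_{k=0}^{∞} f_Y(x + (2k+1)a) converges and 2a Σ_{k=0}^{∞} f_Y(x + (2k+1)a) = ‖f_X‖₁ − F_X(x). -/

import Mathlib

open MeasureTheory Real

lemma fY_eq (a : ℝ) (ha : 0 < a) (fX : ℝ → ℝ)
    (fε : ℝ → ℝ) (hfε : fε = Set.indicator (Set.Icc (-a) a) fun _ => 1 / (2 * a))
    (fY : ℝ → ℝ) (hfY : ∀ x, fY x = ∫ u, fX (x - u) * fε u) (t : ℝ) :
    fY t = (1 / (2 * a)) * ∫ v in Set.Ioc (t - a) (t + a), fX v := by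
  have h1 : (fun u => fX (t - u) * fε u) =
      fun u => Set.indicator (Set.Icc (t - a) (t + a)) (fun v => fX v * (1 / (2 * a))) (t - u) := by
    funext u
    rw [hfε]
    by_cases hu : u ∈ Set.Icc (-a) a
    · rw [Set.indicator_of_mem hu, Set.indicator_of_mem]
      simp only [Set.mem_Icc] at hu ⊢
      constructor <;> linarith [hu.1, hu.2]
    · rw [Set.indicator_of_notMem hu, Set.indicator_of_notMem, mul_zero]
      simp only [Set.mem_Icc, not_and_or, not_le] at hu ⊢
      rcases hu with h | h
      · right; linarith
      · left; linarith
  rw [hfY, h1, integral_sub_left_eq_self _ volume t,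
    MeasureTheory.integral_indicator measurableSet_Icc,
    MeasureTheory.integral_Icc_eq_integral_Ioc, integral_mul_const, mul_comm]

/-- For every `x ∈ ℝ`, the series `Σ_{k=0}^{∞} f_Y(x + (2k+1)a)` converges and
`2a Σ_{k=0}^{∞} f_Y(x + (2k+1)a) = ‖f_X‖₁ − F_X(x)`. -/
theorem stmt_2 (a : ℝ) (ha : 0 < a)
    (fX : ℝ → ℝ) (hfX_pos : ∀ x, 0 ≤ fX x) (hfX_int : Integrable fX)
    (fε : ℝ → ℝ) (hfε : fε = Set.indicator (Set.Icc (-a) a) fun _ => 1 / (2 * a))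
    (FX : ℝ → ℝ) (hFX : ∀ x, FX x = ∫ u in Set.Iic x, fX u)
    (fY : ℝ → ℝ) (hfY : ∀ x, fY x = ∫ u, fX (x - u) * fε u) :
    ∀ x : ℝ, Summable (fun k : ℕ => fY (x + (2 * (k : ℝ) + 1) * a)) ∧
      2 * a * ∑' k : ℕ, fY (x + (2 * (k : ℝ) + 1) * a) = (∫ u, fX u) - FX x := by
  intro x
  set f : ℕ → ℝ := fun n => x + 2 * n * a with hf
  have hfmono : Monotone f := by
    intro m n hmn
    simp only [hf]
    have : (m : ℝ) ≤ n := Nat.cast_le.mpr hmn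
    nlinarith
  set s : ℕ → Set ℝ := fun k => Set.Ioc (f k) (f (k + 1)) with hs
  have hterm : ∀ k : ℕ, fY (x + (2 * (k : ℝ) + 1) * a) = (1 / (2 * a)) * ∫ v in s k, fX v := by
    intro k
    rw [fY_eq a ha fX fε hfε fY hfY,
      show x + (2 * (k : ℝ) + 1) * a - a = f k from by simp only [hf]; ring,
      show x + (2 * (k : ℝ) + 1) * a + a = f (k + 1) from by simp only [hf]; push_cast; ring]
  have hdisj : Pairwise (Function.onFun Disjoint s) := by
    have := hfmono.pairwise_disjoint_on_Ioc_succ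
    simpa [Order.succ_eq_add_one, hs] using this
  have hUnion : (⋃ k, s k) = Set.Ioi x := by
    ext y
    simp only [Set.mem_iUnion, Set.mem_Ioc, Set.mem_Ioi, hs, hf]
    constructor
    · rintro ⟨k, h1, h2⟩
      have : (0:ℝ) ≤ 2 * k * a := by positivity
      linarith
    · intro hy
      set c : ℝ := (y - x) / (2 * a) with hc
      have hc0 : 0 < c := by
        apply div_pos <;> linarith
      refine ⟨⌈c⌉₊ - 1, ?_, ?_⟩
      · have h1 : (⌈c⌉₊ : ℝ) < c + 1 := Nat.ceil_lt_add_one hc0.le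
        have h2 : 1 ≤ ⌈c⌉₊ := Nat.one_le_ceil_iff.mpr hc0
        have h3 : ((⌈c⌉₊ - 1 : ℕ) : ℝ) = (⌈c⌉₊ : ℝ) - 1 := by
          push_cast [h2]; ring
        rw [h3]
        have h5 : (⌈c⌉₊ : ℝ) - 1 < c := by linarith
        have hc' : c * (2 * a) = y - x := by rw [hc]; field_simp
        nlinarith [h5]
      · have h2 : 1 ≤ ⌈c⌉₊ := Nat.one_le_ceil_iff.mpr hc0
        have h3 : ((⌈c⌉₊ - 1 + 1 : ℕ) : ℝ) = (⌈c⌉₊ : ℝ) := by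
          push_cast [h2]; ring
        rw [h3]
        have h4 : c ≤ (⌈c⌉₊ : ℝ) := Nat.le_ceil c
        have hc' : c * (2 * a) = y - x := by rw [hc]; field_simp
        nlinarith [h4]
  have hSum : HasSum (fun k => ∫ v in s k, fX v) (∫ v in Set.Ioi x, fX v) := by
    have := MeasureTheory.hasSum_integral_iUnion (μ := volume) (f := fX)
      (fun k => measurableSet_Ioc) hdisj (hUnion ▸ hfX_int.integrableOn)
    rwa [hUnion] at this
  have hSum2 : HasSum (fun k : ℕ => fY (x + (2 * (k : ℝ) + 1) * a))
      ((1 / (2 * a)) * ∫ v in Set.Ioi x, fX v) := by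
    have := hSum.mul_left (1 / (2 * a))
    simpa only [← hterm] using this
  have ha' : (2 : ℝ) * a ≠ 0 := by positivity
  have hsplit : (∫ v in Set.Iic x, fX v) + (∫ v in Set.Ioi x, fX v) = ∫ v, fX v :=
    intervalIntegral.integral_Iic_add_Ioi hfX_int.integrableOn hfX_int.integrableOn
  refine ⟨hSum2.summable, ?_⟩
  rw [hSum2.tsum_eq, hFX]
  field_simp
  linarith [hsplit]
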